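/- For positive integers m, k and a nonnegative integer ℓ, the function P_{m,k,ℓ}(x₁,…,x_m) := (x₁⋯x_m)^{k+ℓ} · (∂_{x₁} + ⋯ + ∂_{x_m})^ℓ (x₁⋯x_m)^{−k} satisfies, on the domain where all xⱼ ≠ 0, the identity P_{m,k,ℓ}(x)/(x₁⋯x_m)^{ℓ} = (−1)^ℓ ℓ! Σ_{r∈ℕ^m, r₁+⋯+r_m=ℓ} ∏_{j=1}^m ( k^{(r_j)} / r_j! ) · x_j^{−r_j}, where k^{(n)} := k(k+1)⋯(k+n−1). -/

import Mathlib

open Finset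

/-- The operator `∂_{x₁} + ⋯ + ∂_{x_m}` on functions `(Fin m → ℝ) → ℝ`. -/
noncomputable def sumPartialDeriv (m : ℕ) (f : (Fin m → ℝ) → ℝ) : (Fin m → ℝ) → ℝ :=
  fun x => ∑ j : Fin m, fderiv ℝ f x (Pi.single j 1)


lemma isOpen_allNeZero (m : ℕ) : IsOpen {y : Fin m → ℝ | ∀ j, y j ≠ 0} := by
  have h : {y : Fin m → ℝ | ∀ j, y j ≠ 0} = ⋂ j, (fun y : Fin m → ℝ => y j) ⁻¹' {0}ᶜ := by
    ext y; simp
  rw [h]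
  exact isOpen_iInter_of_finite fun j =>
    (isOpen_compl_singleton).preimage (continuous_apply j)

noncomputable def projR {m : ℕ} (i : Fin m) : (Fin m → ℝ) →L[ℝ] ℝ :=
  ContinuousLinearMap.proj i

lemma hasFDerivAt_coord_zpow {m : ℕ} (i : Fin m) (z : ℤ) (x : Fin m → ℝ) (hx : x i ≠ 0) :
    HasFDerivAt (fun y : Fin m → ℝ => y i ^ z)
      (((z : ℝ) * x i ^ (z - 1)) • projR i) x :=
  by have := (hasDerivAt_zpow z (x i) (Or.inl hx)).comp_hasFDerivAt x ((projR i).hasFDerivAt); exact this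

lemma hasFDerivAt_prod_zpow {m : ℕ} (z : Fin m → ℤ) (x : Fin m → ℝ) (hx : ∀ j, x j ≠ 0) :
    HasFDerivAt (fun y : Fin m → ℝ => ∏ i, y i ^ z i)
      (∑ i, (∏ j ∈ Finset.univ.erase i, x j ^ z j) •
        (((z i : ℝ) * x i ^ (z i - 1)) • projR i)) x :=
  HasFDerivAt.finset_prod fun i _ => hasFDerivAt_coord_zpow i (z i) x (hx i)

lemma sumPartialDeriv_sum_const_mul_prod_zpow {m : ℕ} {ι : Type*} [DecidableEq ι] (A : Finset ι)
    (a : ι → ℝ) (z : ι → Fin m → ℤ) (x : Fin m → ℝ) (hx : ∀ j, x j ≠ 0) :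
    sumPartialDeriv m (fun y => ∑ r ∈ A, a r * ∏ i, y i ^ z r i) x
      = ∑ r ∈ A, a r * ∑ j, (z r j : ℝ) *
          ∏ i, x i ^ (z r i - if i = j then 1 else 0) := by
  have H : HasFDerivAt (fun y : Fin m → ℝ => ∑ r ∈ A, a r * ∏ i, y i ^ z r i)
      (∑ r ∈ A, a r • (∑ i, (∏ j ∈ Finset.univ.erase i, x j ^ z r j) •
        (((z r i : ℝ) * x i ^ (z r i - 1)) • projR i))) x :=
    HasFDerivAt.fun_sum fun r _ => (hasFDerivAt_prod_zpow (z r) x hx).const_mul (a r)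
  unfold sumPartialDeriv
  rw [H.fderiv]
  simp only [ContinuousLinearMap.sum_apply, ContinuousLinearMap.smul_apply, projR,
    ContinuousLinearMap.proj_apply, Pi.single_apply, smul_eq_mul]
  rw [Finset.sum_comm]
  refine Finset.sum_congr rfl fun r _ => ?_
  rw [Finset.mul_sum]
  refine Finset.sum_congr rfl fun j _ => ?_
  rw [Finset.sum_eq_single j]
  · have : ∏ i, x i ^ (z r i - if i = j then 1 else 0)
        = x j ^ (z r j - 1) * ∏ i ∈ Finset.univ.erase j, x i ^ z r i := by
      rw [← Finset.mul_prod_erase univ _ (mem_univ j)]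
      simp only [if_pos rfl]
      congr 1
      exact Finset.prod_congr rfl fun i hi => by
        rw [if_neg (Finset.mem_erase.1 hi).1, sub_zero]
    rw [this]; simp only [if_true]; ring
  · intro b _ hb
    simp [if_neg hb]
  · simp

lemma coeff_step (k n : ℕ) :
    ((k : ℝ) + n) * ((k.ascFactorial n : ℝ) / (n.factorial : ℝ))
      = ((n + 1 : ℕ) : ℝ) * ((k.ascFactorial (n + 1) : ℝ) / ((n + 1).factorial : ℝ)) := by
  rw [Nat.ascFactorial_succ, Nat.factorial_succ]
  have h1 : ((n.factorial : ℝ)) ≠ 0 := Nat.cast_ne_zero.2 n.factorial_ne_zero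
  have h2 : (((n : ℝ) + 1)) ≠ 0 := by positivity
  push_cast
  field_simp

lemma key_comb (m k ℓ : ℕ) (x : Fin m → ℝ) :
    ∑ r ∈ Finset.Nat.antidiagonalTuple m ℓ, ∑ j : Fin m,
        (((k : ℝ) + r j) * ∏ i, ((k.ascFactorial (r i) : ℝ) / ((r i).factorial : ℝ))) *
          ∏ i, x i ^ (-(k : ℤ) - r i - if i = j then 1 else 0)
    = ((ℓ : ℝ) + 1) * ∑ s ∈ Finset.Nat.antidiagonalTuple m (ℓ + 1),
        (∏ i, ((k.ascFactorial (s i) : ℝ) / ((s i).factorial : ℝ))) *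
          ∏ i, x i ^ (-(k : ℤ) - s i) := by
  classical
  have hR : ((ℓ : ℝ) + 1) * ∑ s ∈ Finset.Nat.antidiagonalTuple m (ℓ + 1),
        (∏ i, ((k.ascFactorial (s i) : ℝ) / ((s i).factorial : ℝ))) *
          ∏ i, x i ^ (-(k : ℤ) - s i)
      = ∑ s ∈ Finset.Nat.antidiagonalTuple m (ℓ + 1), ∑ j : Fin m,
        ((s j : ℝ) * ∏ i, ((k.ascFactorial (s i) : ℝ) / ((s i).factorial : ℝ))) *
          ∏ i, x i ^ (-(k : ℤ) - s i) := by
    rw [Finset.mul_sum]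
    refine Finset.sum_congr rfl fun s hs => ?_
    have hmem := Finset.Nat.mem_antidiagonalTuple.1 hs
    have hsum : ∑ j, ((s j : ℝ)) = (ℓ : ℝ) + 1 := by
      rw [← Nat.cast_sum, hmem]; push_cast; ring
    rw [← Finset.sum_mul, ← Finset.sum_mul, hsum]
    ring
  rw [hR]
  rw [Finset.sum_sigma' (Finset.Nat.antidiagonalTuple m ℓ) (fun _ => Finset.univ)
    (fun r j => (((k : ℝ) + r j) * ∏ i, ((k.ascFactorial (r i) : ℝ) / ((r i).factorial : ℝ))) *
          ∏ i, x i ^ (-(k : ℤ) - r i - if i = j then 1 else 0)),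
    Finset.sum_sigma' (Finset.Nat.antidiagonalTuple m (ℓ + 1)) (fun _ => Finset.univ)
    (fun s j => ((s j : ℝ) * ∏ i, ((k.ascFactorial (s i) : ℝ) / ((s i).factorial : ℝ))) *
          ∏ i, x i ^ (-(k : ℤ) - s i))]
  conv_rhs => rw [← Finset.sum_filter_of_ne (p := fun p : (_ : Fin m → ℕ) × Fin m => p.1 p.2 ≠ 0)
      (fun p _ hne h0 => by simp [h0] at hne)]
  refine Finset.sum_nbij' (fun p => ⟨p.1 + Pi.single p.2 1, p.2⟩)
    (fun q => ⟨q.1 - Pi.single q.2 1, q.2⟩) ?_ ?_ ?_ ?_ ?_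
  · rintro ⟨r, j⟩ hr
    simp only [Finset.mem_sigma, Finset.Nat.mem_antidiagonalTuple, Finset.mem_univ,
      and_true] at hr
    rw [Finset.mem_filter]
    refine ⟨?_, by simp⟩
    simp only [Finset.mem_sigma, Finset.mem_univ, and_true, Finset.Nat.mem_antidiagonalTuple]
    simp only [Pi.add_apply, Finset.sum_add_distrib, hr, Fintype.sum_pi_single']
  · rintro ⟨s, j⟩ hs
    rw [Finset.mem_filter] at hs
    obtain ⟨hs1, hs2⟩ := hs
    simp only [Finset.mem_sigma, Finset.Nat.mem_antidiagonalTuple, Finset.mem_univ,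
      and_true] at hs1 ⊢
    have hle : 1 ≤ s j := Nat.one_le_iff_ne_zero.2 hs2
    have key : ∀ i, (s - Pi.single j 1 : Fin m → ℕ) i = s i - (Pi.single j 1 : Fin m → ℕ) i :=
      fun i => Pi.sub_apply s _ i
    have h1 : ∑ i ∈ Finset.univ.erase j, (s - Pi.single j 1 : Fin m → ℕ) i
        = ∑ i ∈ Finset.univ.erase j, s i :=
      Finset.sum_congr rfl fun i hi => by
        simp [key, Pi.single_apply, (Finset.mem_erase.1 hi).1]
    have h2 : ∑ i ∈ Finset.univ.erase j, s i + s j = ℓ + 1 := by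
      rw [Finset.sum_erase_add _ _ (Finset.mem_univ j), hs1]
    rw [← Finset.sum_erase_add _ _ (Finset.mem_univ j), h1, key j]
    simp only [Pi.single_eq_same]
    omega
  · rintro ⟨r, j⟩ _
    have hfun : (r + Pi.single j 1 - Pi.single j 1 : Fin m → ℕ) = r := by
      funext i
      simp only [Pi.sub_apply, Pi.add_apply]
      omega
    simp only [hfun]
  · rintro ⟨s, j⟩ hs
    rw [Finset.mem_filter] at hs
    have hle : 1 ≤ s j := Nat.one_le_iff_ne_zero.2 hs.2
    have hfun : (s - Pi.single j 1 + Pi.single j 1 : Fin m → ℕ) = s := by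
      funext i
      simp only [Pi.sub_apply, Pi.add_apply]
      rcases eq_or_ne i j with rfl | hij
      · simp only [Pi.single_eq_same]; omega
      · simp [Pi.single_apply, hij]
    simp only [hfun]
  · rintro ⟨r, j⟩ hr
    simp only
    have hadd : (r + Pi.single j 1 : Fin m → ℕ) = fun i => r i + if i = j then 1 else 0 := by
      funext i; simp [Pi.single_apply]
    rw [hadd]
    simp only
    congr 1
    · -- coefficients
      rw [← Finset.mul_prod_erase univ
          (fun i => ((k.ascFactorial (r i) : ℝ) / ((r i).factorial : ℝ))) (Finset.mem_univ j),
        ← Finset.mul_prod_erase univ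
          (fun i => ((k.ascFactorial (r i + if i = j then 1 else 0) : ℝ) /
            ((r i + if i = j then 1 else 0).factorial : ℝ))) (Finset.mem_univ j),
        ← mul_assoc, ← mul_assoc]
      congr 1
      · simp only [if_pos rfl]
        rw [coeff_step k (r j)]
        push_cast
        ring
      · exact Finset.prod_congr rfl fun i hi => by
          rw [if_neg (Finset.mem_erase.1 hi).1, Nat.add_zero]
    · refine Finset.prod_congr rfl fun i _ => ?_
      congr 1
      push_cast
      split <;> ring


lemma sumPartialDeriv_congr {m : ℕ} {f g : (Fin m → ℝ) → ℝ} {x : Fin m → ℝ}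
    (h : f =ᶠ[nhds x] g) : sumPartialDeriv m f x = sumPartialDeriv m g x := by
  unfold sumPartialDeriv
  rw [h.fderiv_eq]

lemma iterate_formula (m k : ℕ) (ℓ : ℕ) :
    ∀ x : Fin m → ℝ, (∀ j, x j ≠ 0) →
    (sumPartialDeriv m)^[ℓ] (fun y : Fin m → ℝ => (∏ j, y j) ^ (-(k : ℤ))) x
      = ∑ r ∈ Finset.Nat.antidiagonalTuple m ℓ,
          ((-1) ^ ℓ * (ℓ.factorial : ℝ) *
              ∏ i, ((k.ascFactorial (r i) : ℝ) / ((r i).factorial : ℝ))) *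
            ∏ i, x i ^ (-(k : ℤ) - r i) := by
  induction ℓ with
  | zero =>
    intro x hx
    simp only [Function.iterate_zero, id_eq, Finset.Nat.antidiagonalTuple_zero_right,
      Finset.sum_singleton, Pi.zero_apply, Nat.ascFactorial_zero, Nat.cast_one,
      Nat.factorial_zero, pow_zero, one_mul, Nat.cast_zero, sub_zero, div_one,
      Finset.prod_const_one, mul_one, Nat.cast_ofNat]
    rw [Finset.prod_zpow]
  | succ n ih =>
    intro x hx
    rw [Function.iterate_succ_apply']
    have heq : (sumPartialDeriv m)^[n] (fun y : Fin m → ℝ => (∏ j, y j) ^ (-(k : ℤ)))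
        =ᶠ[nhds x] fun y => ∑ r ∈ Finset.Nat.antidiagonalTuple m n,
          ((-1) ^ n * (n.factorial : ℝ) *
              ∏ i, ((k.ascFactorial (r i) : ℝ) / ((r i).factorial : ℝ))) *
            ∏ i, y i ^ (-(k : ℤ) - r i) :=
      Filter.eventuallyEq_of_mem ((isOpen_allNeZero m).mem_nhds hx) fun y hy => ih y hy
    have hcongr : sumPartialDeriv m
        ((sumPartialDeriv m)^[n] (fun y : Fin m → ℝ => (∏ j, y j) ^ (-(k : ℤ)))) x
        = sumPartialDeriv m (fun y => ∑ r ∈ Finset.Nat.antidiagonalTuple m n,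
          ((-1) ^ n * (n.factorial : ℝ) *
              ∏ i, ((k.ascFactorial (r i) : ℝ) / ((r i).factorial : ℝ))) *
            ∏ i, y i ^ (-(k : ℤ) - r i)) x := sumPartialDeriv_congr heq
    rw [hcongr, sumPartialDeriv_sum_const_mul_prod_zpow (Finset.Nat.antidiagonalTuple m n)
      _ (fun r i => -(k : ℤ) - r i) x hx]
    have hstep : ∀ r ∈ Finset.Nat.antidiagonalTuple m n,
        ((-1) ^ n * (n.factorial : ℝ) *
            ∏ i, ((k.ascFactorial (r i) : ℝ) / ((r i).factorial : ℝ))) *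
          ∑ j, ((-(k : ℤ) - r j : ℤ) : ℝ) *
            ∏ i, x i ^ ((-(k : ℤ) - r i) - if i = j then 1 else 0)
        = (-((-1) ^ n * (n.factorial : ℝ))) *
          ∑ j : Fin m, (((k : ℝ) + r j) *
              ∏ i, ((k.ascFactorial (r i) : ℝ) / ((r i).factorial : ℝ))) *
            ∏ i, x i ^ (-(k : ℤ) - r i - if i = j then 1 else 0) := by
      intro r _
      rw [Finset.mul_sum, Finset.mul_sum]
      refine Finset.sum_congr rfl fun j _ => ?_
      push_cast
      ring
    rw [Finset.sum_congr rfl hstep, ← Finset.mul_sum, key_comb m k n x, Finset.mul_sum,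
      Finset.mul_sum]
    refine Finset.sum_congr rfl fun s _ => ?_
    push_cast [Nat.factorial_succ, pow_succ]
    ring


/-- With `P_{m,k,ℓ}(x) = (x₁⋯x_m)^{k+ℓ} (∂_{x₁}+⋯+∂_{x_m})^ℓ (x₁⋯x_m)^{−k}`, on the domain
where all `xⱼ ≠ 0` we have
`P_{m,k,ℓ}(x)/(x₁⋯x_m)^ℓ = (−1)^ℓ ℓ! Σ_{r ∈ ℕ^m, Σrⱼ=ℓ} ∏ⱼ (k^{(rⱼ)}/rⱼ!) xⱼ^{−rⱼ}`,
where `k^{(n)} = k(k+1)⋯(k+n−1)` is the rising factorial. -/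
theorem sumPartialDeriv_iterate_prod_zpow (m k : ℕ) (hm : 0 < m) (hk : 0 < k) (ℓ : ℕ)
    (x : Fin m → ℝ) (hx : ∀ j, x j ≠ 0) :
    ((∏ j, x j) ^ ((k : ℤ) + ℓ) *
        (sumPartialDeriv m)^[ℓ] (fun y : Fin m → ℝ => (∏ j, y j) ^ (-(k : ℤ))) x) /
        (∏ j, x j) ^ (ℓ : ℤ) =
      (-1) ^ ℓ * (Nat.factorial ℓ : ℝ) *
        ∑ r ∈ Finset.Nat.antidiagonalTuple m ℓ,
          ∏ j, ((k.ascFactorial (r j) : ℝ) / (Nat.factorial (r j) : ℝ)) *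
            x j ^ (-(r j : ℤ)) := by
  have hprod : (∏ j, x j) ≠ 0 := Finset.prod_ne_zero_iff.2 fun j _ => hx j
  rw [iterate_formula m k ℓ x hx, zpow_add₀ hprod]
  rw [mul_right_comm, mul_div_assoc, div_self (zpow_ne_zero _ hprod), mul_one]
  rw [Finset.mul_sum, Finset.mul_sum]
  refine Finset.sum_congr rfl fun r _ => ?_
  rw [Finset.prod_mul_distrib]
  have hpow : (∏ j, x j) ^ (k : ℤ) * ∏ i, x i ^ (-(k : ℤ) - r i)
      = ∏ j, x j ^ (-(r j : ℤ)) := by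
    rw [← Finset.prod_zpow, ← Finset.prod_mul_distrib]
    refine Finset.prod_congr rfl fun i _ => ?_
    rw [← zpow_add₀ (hx i)]
    congr 1
    ring
  calc (∏ j, x j) ^ (k : ℤ) *
        ((-1) ^ ℓ * (ℓ.factorial : ℝ) *
            (∏ i, ((k.ascFactorial (r i) : ℝ) / ((r i).factorial : ℝ))) *
          ∏ i, x i ^ (-(k : ℤ) - r i))
      = (-1) ^ ℓ * (ℓ.factorial : ℝ) *
          ((∏ i, ((k.ascFactorial (r i) : ℝ) / ((r i).factorial : ℝ))) *
            ((∏ j, x j) ^ (k : ℤ) * ∏ i, x i ^ (-(k : ℤ) - r i))) := by ring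
    _ = _ := by rw [hpow]
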